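/- For complex q, z with |q| < 1, z ≠ 0, |zq| < 1, and |q/z| < 1, Σ_{n≥0} z^{−n} qⁿ / (zq; q²)_{n+1} = Σ_{n≥0} zⁿ qⁿ / (q/z; q²)_{n+1}. -/

import Mathlib

open scoped BigOperators

/-- Finite q-Pochhammer symbol `(a; q)_n`. -/
noncomputable def qPoch (a q : ℂ) (n : ℕ) : ℂ :=
  ∏ k ∈ Finset.range n, (1 - a * q ^ k)

/-- Infinite q-Pochhammer symbol `(a; q)_∞`. -/
noncomputable def qPochInf (a q : ℂ) : ℂ :=
  ∏' k : ℕ, (1 - a * q ^ k)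

/-- Gaussian-binomial-like coefficients: `cc Q n m` is the Gaussian binomial
`[n+m, n]` evaluated at `Q`. -/
noncomputable def cc (Q : ℂ) : ℕ → ℕ → ℂ
  | 0, _ => 1
  | _+1, 0 => 1
  | n+1, m+1 => cc Q n (m+1) + Q^(n+1) * cc Q (n+1) m

lemma cc_zero_left (Q : ℂ) (m : ℕ) : cc Q 0 m = 1 := by simp [cc]

lemma cc_zero_right (Q : ℂ) (n : ℕ) : cc Q n 0 = 1 := by
  cases n <;> simp [cc]

lemma cc_succ (Q : ℂ) (n m : ℕ) :
    cc Q (n+1) (m+1) = cc Q n (m+1) + Q^(n+1) * cc Q (n+1) m := by rw [cc]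

lemma cc_one_left (Q : ℂ) (m : ℕ) : cc Q 1 m = ∑ j ∈ Finset.range (m+1), Q^j := by
  induction m with
  | zero => simp [cc_zero_right]
  | succ m ih =>
      rw [cc_succ, cc_zero_left, ih, geom_sum_succ (n := m+1)]
      ring

lemma cc_one_right (Q : ℂ) (n : ℕ) : cc Q n 1 = ∑ j ∈ Finset.range (n+1), Q^j := by
  induction n with
  | zero => simp [cc_zero_left]
  | succ n ih =>
      rw [cc_succ, cc_zero_right, ih, geom_sum_succ' (n := n+1)]
      ring

/-- The dual Pascal recurrence. -/
lemma cc_dual (Q : ℂ) : ∀ n m : ℕ,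
    cc Q (n+1) (m+1) = cc Q (n+1) m + Q^(m+1) * cc Q n (m+1) := by
  intro n
  induction n with
  | zero =>
      intro m
      have e1 := cc_one_left Q (m+1)
      have e2 := cc_one_left Q m
      have e3 := cc_zero_left Q (m+1)
      have e4 : (∑ j ∈ Finset.range (m+1+1), Q^j)
          = Q^(m+1) + ∑ j ∈ Finset.range (m+1), Q^j := geom_sum_succ' (n := m+1)
      linear_combination e1 - e2 - Q^(m+1) * e3 + e4
  | succ n ihn =>
      intro m
      induction m with
      | zero =>
          have e1 := cc_succ Q (n+1) 0
          have e2 := cc_one_right Q (n+1)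
          have e3 := cc_one_right Q (n+2)
          have e4 := cc_zero_right Q (n+2)
          have e5 := cc_zero_right Q (n+1)
          have e6 : (∑ j ∈ Finset.range (n+2+1), Q^j)
              = Q * ∑ j ∈ Finset.range (n+2), Q^j + 1 := geom_sum_succ (n := n+2)
          linear_combination e3 - e4 - Q*e2 + e6
      | succ m ihm =>
          have e1 := cc_succ Q (n+1) (m+1)
          have e2 := ihn (m+1)
          have e3 := ihm
          have e4 := cc_succ Q (n+1) m
          have e5 := cc_succ Q n (m+1)
          linear_combination e1 + e2 + Q^(n+1+1)*e3 - e4 - Q^(m+1+1)*e5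

lemma cc_symm (Q : ℂ) : ∀ n m : ℕ, cc Q n m = cc Q m n := by
  intro n
  induction n with
  | zero => intro m; rw [cc_zero_left, cc_zero_right]
  | succ n ihn =>
      intro m
      induction m with
      | zero => rw [cc_zero_left, cc_zero_right]
      | succ m ihm =>
          rw [cc_succ, ihn (m+1), ihm, cc_dual Q m n]

/-- Bound for the coefficients. -/
noncomputable def BB (t : ℝ) (n : ℕ) : ℝ := ∏ k ∈ Finset.range n, (1 - t^(k+1))⁻¹

lemma BB_pos_facts {t : ℝ} (ht0 : 0 ≤ t) (ht1 : t < 1) (k : ℕ) :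
    0 < 1 - t^(k+1) := by
  have : t^(k+1) < 1 := pow_lt_one₀ ht0 ht1 (Nat.succ_ne_zero k)
  linarith

lemma one_le_BB {t : ℝ} (ht0 : 0 ≤ t) (ht1 : t < 1) (n : ℕ) : 1 ≤ BB t n := by
  induction n with
  | zero => simp [BB]
  | succ n ih =>
      rw [show BB t (n+1) = BB t n * (1 - t^(n+1))⁻¹ from by unfold BB; rw [Finset.prod_range_succ]]
      have h1 : (1:ℝ) ≤ (1 - t^(n+1))⁻¹ := by
        refine (one_le_inv₀ (BB_pos_facts ht0 ht1 n)).mpr ?_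
        nlinarith [pow_nonneg ht0 (n+1)]
      nlinarith

lemma BB_succ (t : ℝ) (n : ℕ) : BB t (n+1) = BB t n * (1 - t^(n+1))⁻¹ := by
  unfold BB; rw [Finset.prod_range_succ]

lemma norm_cc_le {Q : ℂ} (hQ : ‖Q‖ < 1) : ∀ n m : ℕ, ‖cc Q n m‖ ≤ BB ‖Q‖ n := by
  have ht0 : (0:ℝ) ≤ ‖Q‖ := norm_nonneg _
  intro n
  induction n with
  | zero => intro m; rw [cc_zero_left]; simp [BB]
  | succ n ihn =>
      intro m
      induction m with
      | zero =>
          rw [cc_zero_right]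
          simpa using one_le_BB ht0 hQ (n+1)
      | succ m ihm =>
          rw [cc_succ]
          have hne : (1 - ‖Q‖^(n+1)) ≠ 0 := (BB_pos_facts ht0 hQ n).ne'
          have e : BB ‖Q‖ n = BB ‖Q‖ (n+1) * (1 - ‖Q‖^(n+1)) := by
            rw [BB_succ, mul_assoc, inv_mul_cancel₀ hne, mul_one]
          calc ‖cc Q n (m+1) + Q^(n+1) * cc Q (n+1) m‖
              ≤ ‖cc Q n (m+1)‖ + ‖Q^(n+1) * cc Q (n+1) m‖ := norm_add_le _ _
            _ ≤ BB ‖Q‖ n + ‖Q‖^(n+1) * BB ‖Q‖ (n+1) := by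
                refine add_le_add (ihn (m+1)) ?_
                rw [norm_mul, norm_pow]
                exact mul_le_mul_of_nonneg_left ihm (pow_nonneg ht0 _)
            _ = BB ‖Q‖ (n+1) := by linear_combination e

/-- Uniform bound for `BB`. -/
lemma BB_le_K {t : ℝ} (ht0 : 0 ≤ t) (ht1 : t < 1) (n : ℕ) :
    BB t n ≤ Real.exp ((1-t)⁻¹ * (1-t)⁻¹) := by
  have h1t : (0:ℝ) < 1 - t := by linarith
  have hv0 : (0:ℝ) ≤ (1-t)⁻¹ := inv_nonneg.mpr h1t.le
  have hv : (1-t) * (1-t)⁻¹ = 1 := mul_inv_cancel₀ h1t.ne'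
  have step : ∀ k ∈ Finset.range n, (1 - t^(k+1))⁻¹ ≤ Real.exp (t^(k+1) * (1-t)⁻¹) := by
    intro k _
    have hu0 : 0 ≤ t^(k+1) := pow_nonneg ht0 _
    have hut : t^(k+1) ≤ t := pow_le_of_le_one ht0 ht1.le (Nat.succ_ne_zero k)
    have hden := BB_pos_facts ht0 ht1 k
    have key : (1 - t^(k+1))⁻¹ ≤ 1 + t^(k+1) * (1-t)⁻¹ := by
      rw [inv_le_iff_one_le_mul₀ hden]
      have expand : (1 + t^(k+1) * (1-t)⁻¹) * (1 - t^(k+1)) - 1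
          = t^(k+1) * (1-t)⁻¹ * (t - t^(k+1)) + t^(k+1) * ((1-t) * (1-t)⁻¹ - 1) := by
        ring
      have hnn : 0 ≤ t^(k+1) * (1-t)⁻¹ * (t - t^(k+1)) :=
        mul_nonneg (mul_nonneg hu0 hv0) (sub_nonneg.mpr hut)
      nlinarith [expand, hnn, hv]
    calc (1 - t^(k+1))⁻¹ ≤ 1 + t^(k+1) * (1-t)⁻¹ := key
      _ ≤ Real.exp (t^(k+1) * (1-t)⁻¹) := by
          have := Real.add_one_le_exp (t^(k+1) * (1-t)⁻¹); linarith
  have hsum : ∑ k ∈ Finset.range n, t^(k+1) ≤ (1-t)⁻¹ := by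
    calc ∑ k ∈ Finset.range n, t^(k+1) ≤ ∑ k ∈ Finset.range n, t^k := by
          refine Finset.sum_le_sum ?_
          intro k _
          exact pow_le_pow_of_le_one ht0 ht1.le (Nat.le_succ k)
      _ ≤ ∑' k : ℕ, t^k := Summable.sum_le_tsum _ (fun k _ => pow_nonneg ht0 k)
          (summable_geometric_of_lt_one ht0 ht1)
      _ = (1-t)⁻¹ := tsum_geometric_of_lt_one ht0 ht1
  calc BB t n ≤ ∏ k ∈ Finset.range n, Real.exp (t^(k+1) * (1-t)⁻¹) := by
        refine Finset.prod_le_prod ?_ step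
        intro k _; exact (inv_nonneg.mpr (BB_pos_facts ht0 ht1 k).le)
    _ = Real.exp (∑ k ∈ Finset.range n, t^(k+1) * (1-t)⁻¹) := (Real.exp_sum _ _).symm
    _ ≤ Real.exp ((1-t)⁻¹ * (1-t)⁻¹) := by
        apply Real.exp_le_exp.mpr
        rw [← Finset.sum_mul]
        exact mul_le_mul_of_nonneg_right hsum hv0

lemma summable_cc {Q x : ℂ} (hQ : ‖Q‖ < 1) (hx : ‖x‖ < 1) (n : ℕ) :
    Summable (fun m => cc Q n m * x^m) := by
  refine Summable.of_norm_bounded (g := fun m => BB ‖Q‖ n * ‖x‖^m)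
    ((summable_geometric_of_lt_one (norm_nonneg _) hx).mul_left _) ?_
  intro m
  rw [norm_mul, norm_pow]
  exact mul_le_mul_of_nonneg_right (norm_cc_le hQ n m) (pow_nonneg (norm_nonneg _) m)

lemma one_sub_ne {a : ℂ} (ha : ‖a‖ < 1) : 1 - a ≠ 0 := by
  intro h
  have : a = 1 := by linear_combination -h
  rw [this] at ha; simp at ha

/-- The generating-function recurrence: `(1 - x Q^{n+1}) G(n+1) = G n`. -/
lemma G_rec {Q x : ℂ} (hQ : ‖Q‖ < 1) (hx : ‖x‖ < 1) (n : ℕ) :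
    (∑' m : ℕ, cc Q (n+1) m * x^m)
      = (∑' m : ℕ, cc Q n m * x^m) + x * Q^(n+1) * (∑' m : ℕ, cc Q (n+1) m * x^m) := by
  have hs1 : Summable (fun m => cc Q (n+1) m * x^m) := summable_cc hQ hx (n+1)
  have hs0 : Summable (fun m => cc Q n m * x^m) := summable_cc hQ hx n
  have hs0' : Summable (fun m => cc Q n (m+1) * x^(m+1)) := by
    exact (summable_nat_add_iff (f := fun m => cc Q n m * x^m) 1).mpr hs0
  have hs1' : Summable (fun m => x * Q^(n+1) * (cc Q (n+1) m * x^m)) := hs1.mul_left _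
  calc (∑' m : ℕ, cc Q (n+1) m * x^m)
      = cc Q (n+1) 0 * x^0 + ∑' m : ℕ, cc Q (n+1) (m+1) * x^(m+1) :=
        Summable.tsum_eq_zero_add hs1
    _ = 1 + ∑' m : ℕ, (cc Q n (m+1) * x^(m+1) + x * Q^(n+1) * (cc Q (n+1) m * x^m)) := by
        rw [cc_zero_right]
        congr 1
        · simp
        · congr 1; funext m; rw [cc_succ]; ring
    _ = 1 + ((∑' m : ℕ, cc Q n (m+1) * x^(m+1)) + ∑' m : ℕ, x * Q^(n+1) * (cc Q (n+1) m * x^m)) := by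
        rw [Summable.tsum_add hs0' hs1']
    _ = (cc Q n 0 * x^0 + ∑' m : ℕ, cc Q n (m+1) * x^(m+1))
          + x * Q^(n+1) * (∑' m : ℕ, cc Q (n+1) m * x^m) := by
        rw [tsum_mul_left, cc_zero_right]
        ring
    _ = (∑' m : ℕ, cc Q n m * x^m) + x * Q^(n+1) * (∑' m : ℕ, cc Q (n+1) m * x^m) := by
        rw [← Summable.tsum_eq_zero_add hs0]

lemma qPoch_mul_G {Q x : ℂ} (hQ : ‖Q‖ < 1) (hx : ‖x‖ < 1) (n : ℕ) :
    qPoch x Q (n+1) * (∑' m : ℕ, cc Q n m * x^m) = 1 := by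
  induction n with
  | zero =>
      have h1 : qPoch x Q 1 = 1 - x := by
        unfold qPoch; rw [Finset.prod_range_one]; simp
      rw [h1]
      have hgeo : (∑' m : ℕ, cc Q 0 m * x^m) = (1 - x)⁻¹ := by
        rw [show (fun m : ℕ => cc Q 0 m * x^m) = fun m : ℕ => x^m from funext fun m => by
          rw [cc_zero_left, one_mul]]
        exact tsum_geometric_of_norm_lt_one hx
      rw [hgeo, mul_inv_cancel₀ (one_sub_ne hx)]
  | succ n ih =>
      have hfac : qPoch x Q (n+2) = qPoch x Q (n+1) * (1 - x * Q^(n+1)) := by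
        unfold qPoch; rw [Finset.prod_range_succ]
      have hkey : (1 - x * Q^(n+1)) * (∑' m : ℕ, cc Q (n+1) m * x^m)
          = ∑' m : ℕ, cc Q n m * x^m := by
        have h := G_rec hQ hx n
        linear_combination h
      rw [hfac, mul_assoc, hkey, ih]

lemma qPoch_ne_zero {Q x : ℂ} (hQ : ‖Q‖ ≤ 1) (hx : ‖x‖ < 1) (n : ℕ) :
    qPoch x Q n ≠ 0 := by
  unfold qPoch
  refine Finset.prod_ne_zero_iff.mpr ?_
  intro k _
  apply one_sub_ne
  calc ‖x * Q^k‖ = ‖x‖ * ‖Q‖^k := by rw [norm_mul, norm_pow]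
    _ ≤ ‖x‖ * 1 := by
        refine mul_le_mul_of_nonneg_left ?_ (norm_nonneg _)
        exact pow_le_one₀ (norm_nonneg _) hQ
    _ < 1 := by rwa [mul_one]

lemma G_eq {Q x : ℂ} (hQ : ‖Q‖ < 1) (hx : ‖x‖ < 1) (n : ℕ) :
    (∑' m : ℕ, cc Q n m * x^m) = (qPoch x Q (n+1))⁻¹ := by
  have h := qPoch_mul_G hQ hx n
  have hne := qPoch_ne_zero hQ.le hx (n+1)
  field_simp
  linear_combination h

theorem omega_conjugate_symmetry (q z : ℂ) (hq : ‖q‖ < 1) (hz : z ≠ 0)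
    (hzq : ‖z * q‖ < 1) (hqz : ‖q / z‖ < 1)
    (hdz : ∀ k : ℕ, 1 - z * q ^ (2 * k + 1) ≠ 0)
    (hdz' : ∀ k : ℕ, 1 - (q / z) * q ^ (2 * k) ≠ 0) :
    ∑' n : ℕ, z⁻¹ ^ n * q ^ n / qPoch (z * q) (q ^ 2) (n + 1)
      = ∑' n : ℕ, z ^ n * q ^ n / qPoch (q / z) (q ^ 2) (n + 1) := by
  have hQ : ‖q ^ 2‖ < 1 := by
    rw [norm_pow]
    calc ‖q‖^2 ≤ ‖q‖ := pow_le_of_le_one (norm_nonneg _) hq.le two_ne_zero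
      _ < 1 := hq
  have hx : ‖z * q‖ < 1 := hzq
  have hy : ‖q / z‖ < 1 := hqz
  have hK : ∀ n m : ℕ, ‖cc (q^2) n m‖ ≤ Real.exp ((1-‖q^2‖)⁻¹ * (1-‖q^2‖)⁻¹) :=
    fun n m => (norm_cc_le hQ n m).trans (BB_le_K (norm_nonneg _) hQ n)
  have hsum2 : ∀ u v : ℂ, ‖u‖ < 1 → ‖v‖ < 1 →
      Summable (fun p : ℕ × ℕ => u ^ p.1 * (cc (q^2) p.1 p.2 * v ^ p.2)) := by
    intro u v hu hv
    set K : ℝ := Real.exp ((1-‖q^2‖)⁻¹ * (1-‖q^2‖)⁻¹) with hKdef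
    refine Summable.of_norm_bounded
      (g := fun p : ℕ × ℕ => (K * ‖u‖ ^ p.1) * ‖v‖ ^ p.2) ?_ ?_
    · exact Summable.mul_of_nonneg
        (((summable_geometric_of_lt_one (norm_nonneg _) hu).mul_left _))
        (summable_geometric_of_lt_one (norm_nonneg _) hv)
        (fun n => mul_nonneg (Real.exp_pos _).le (pow_nonneg (norm_nonneg _) _))
        (fun m => pow_nonneg (norm_nonneg _) _)
    · rintro ⟨n, m⟩
      simp only [norm_mul, norm_pow]
      calc ‖u‖^n * (‖cc (q^2) n m‖ * ‖v‖^m)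
          ≤ ‖u‖^n * (K * ‖v‖^m) := by
            refine mul_le_mul_of_nonneg_left ?_ (pow_nonneg (norm_nonneg _) n)
            refine mul_le_mul_of_nonneg_right ?_ (pow_nonneg (norm_nonneg _) m)
            rw [hKdef]
            exact hK n m
        _ = K * ‖u‖^n * ‖v‖^m := by ring
  have hfs := hsum2 (q/z) (z*q) hy hx
  have hgs := hsum2 (z*q) (q/z) hx hy
  have hLrow : ∀ n : ℕ, Summable (fun m : ℕ => (q/z) ^ n * (cc (q^2) n m * (z*q) ^ m)) :=
    fun n => (summable_cc hQ hx n).mul_left _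
  have hL : (∑' n : ℕ, z⁻¹ ^ n * q ^ n / qPoch (z * q) (q ^ 2) (n + 1))
      = ∑' p : ℕ × ℕ, (q/z) ^ p.1 * (cc (q^2) p.1 p.2 * (z*q) ^ p.2) := by
    rw [Summable.tsum_prod' hfs hLrow]
    refine tsum_congr fun n => ?_
    show z⁻¹ ^ n * q ^ n / qPoch (z * q) (q ^ 2) (n + 1)
        = ∑' (c : ℕ), (q / z) ^ n * (cc (q ^ 2) n c * (z * q) ^ c)
    rw [tsum_mul_left, G_eq hQ hx n, div_eq_mul_inv]
    congr 1
    rw [div_eq_mul_inv q z, mul_pow, mul_comm]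
  have hRrow : ∀ n : ℕ, Summable (fun m : ℕ => (z*q) ^ n * (cc (q^2) n m * (q/z) ^ m)) :=
    fun n => (summable_cc hQ hy n).mul_left _
  have hR : (∑' n : ℕ, z ^ n * q ^ n / qPoch (q / z) (q ^ 2) (n + 1))
      = ∑' p : ℕ × ℕ, (z*q) ^ p.1 * (cc (q^2) p.1 p.2 * (q/z) ^ p.2) := by
    rw [Summable.tsum_prod' hgs hRrow]
    refine tsum_congr fun n => ?_
    show z ^ n * q ^ n / qPoch (q / z) (q ^ 2) (n + 1)
        = ∑' (c : ℕ), (z * q) ^ n * (cc (q ^ 2) n c * (q / z) ^ c)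
    rw [tsum_mul_left, G_eq hQ hy n, div_eq_mul_inv]
    congr 1
    rw [mul_pow]
  rw [hL, hR]
  have hswap : (fun p : ℕ × ℕ => (z*q) ^ p.1 * (cc (q^2) p.1 p.2 * (q/z) ^ p.2))
      = fun p : ℕ × ℕ => ((q/z) ^ (p.swap).1 * (cc (q^2) (p.swap).1 (p.swap).2 * (z*q) ^ (p.swap).2)) := by
    funext p
    obtain ⟨n, m⟩ := p
    simp only [Prod.swap]
    rw [cc_symm (q^2) n m]
    ring
  rw [hswap]
  exact ((Equiv.prodComm ℕ ℕ).tsum_eq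
    (fun p : ℕ × ℕ => (q/z) ^ p.1 * (cc (q^2) p.1 p.2 * (z*q) ^ p.2))).symm
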